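/- Let d ≥ 2, n ≥ 2d, and let μ, ν be partitions of n. Then there exist a constant C > 0 and δ ∈ (0,1) such that for all q ∈ (0, δ): | H^d_q(μ, ν) − q^d Σ_{μ^{(1)}: ℓ*(μ^{(1)}) = d} H(μ^{(1)}, μ, ν) − q^{d+1} Σ_{(μ^{(1)}, μ^{(2)}): ℓ*(μ^{(1)}) = d−1, ℓ*(μ^{(2)}) = 1} H(μ^{(1)}, μ^{(2)}, μ, ν) | ≤ C · q^{d+2}, where the first sum runs over partitions μ^{(1)} of n with colength d and the second over ordered pairs of partitions of n with the indicated colengths. -/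

import Mathlib

open scoped Classical

/-- The colength `ℓ*(μ) = |μ| - ℓ(μ)` of a partition `μ` of `n`. -/
def colen {n : ℕ} (P : Nat.Partition n) : ℕ := n - Multiset.card P.parts

/-- `𝔐^{(n)}_{d,k}`: the set of `k`-tuples `(μ⁽¹⁾, …, μ⁽ᵏ⁾)` of partitions of `n` with
`ℓ*(μ⁽ʲ⁾) ≥ 1` for all `j` and `Σⱼ ℓ*(μ⁽ʲ⁾) = d`. -/
noncomputable def Mset (n d k : ℕ) : Finset (Fin k → Nat.Partition n) :=
  Finset.univ.filter (fun T => (∀ j, 1 ≤ colen (T j)) ∧ ∑ j, colen (T j) = d)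

/-- The weight `W_q(μ⁽¹⁾, …, μ⁽ᵏ⁾) = ∏ⱼ q^{Tⱼ}/(1 - q^{Tⱼ})`, with
`Tⱼ = ℓ*(μ⁽¹⁾) + … + ℓ*(μ⁽ʲ⁾)`. -/
noncomputable def Wq (q : ℝ) {n k : ℕ} (T : Fin k → Nat.Partition n) : ℝ :=
  ∏ j : Fin k,
    (q ^ (∑ i ∈ Finset.univ.filter (fun i => i ≤ j), colen (T i)) /
      (1 - q ^ (∑ i ∈ Finset.univ.filter (fun i => i ≤ j), colen (T i))))

/-- The Hurwitz number `H(μ⁽¹⁾, …, μ⁽ᵐ⁾)`: the number of `m`-tuples `(h₁, …, h_m)` of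
permutations in `S_n` with `h₁h₂⋯h_m = id` and the cycle type of `hᵢ` equal to `μ⁽ⁱ⁾`
for each `i`, divided by `n!`. -/
noncomputable def Hur {n m : ℕ} (M : Fin m → Nat.Partition n) : ℚ :=
  (Nat.card {h : Fin m → Equiv.Perm (Fin n) //
      (List.ofFn h).prod = 1 ∧ ∀ i, (h i).partition.parts = (M i).parts} : ℚ)
    / (n.factorial : ℚ)

/-- The quantum weighted double Hurwitz number
`H^d_q(μ,ν) = Σ_{k=1}^d Σ_{T ∈ 𝔐^{(n)}_{d,k}} W_q(T)·H(T, μ, ν)`. -/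
noncomputable def Hdq (q : ℝ) (d : ℕ) {n : ℕ} (μ ν : Nat.Partition n) : ℝ :=
  ∑ k ∈ Finset.Icc 1 d, ∑ T ∈ Mset n d k,
    Wq q T * ((Hur (Fin.snoc (Fin.snoc T μ) ν) : ℚ) : ℝ)

/-! ### Auxiliary lemmas -/

lemma parts_conj {n : ℕ} (σ τ : Equiv.Perm (Fin n)) :
    (σ * τ * σ⁻¹).partition.parts = τ.partition.parts := by
  have : (σ * τ * σ⁻¹).partition = τ.partition := by
    rw [← Equiv.Perm.partition_eq_of_isConj]
    exact isConj_iff.2 ⟨σ⁻¹, by group⟩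
  rw [this]

lemma ofFn4_prod {M : Type*} [Monoid M] (h : Fin 4 → M) :
    (List.ofFn h).prod = h 0 * h 1 * h 2 * h 3 := by
  have : (List.ofFn h) = [h 0, h 1, h 2, h 3] := by
    simp [List.ofFn_succ]
  rw [this]; simp [mul_assoc]

/-- Hurwitz numbers are symmetric in the first two of four arguments. -/
lemma hur_swap {n : ℕ} (A B μ ν : Nat.Partition n) :
    Hur ![A, B, μ, ν] = Hur ![B, A, μ, ν] := by
  unfold Hur
  congr 1
  norm_cast
  apply Nat.card_congr
  refine ⟨fun h => ⟨![h.1 0 * h.1 1 * (h.1 0)⁻¹, h.1 0, h.1 2, h.1 3], ?_, ?_⟩,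
          fun g => ⟨![g.1 1, (g.1 1)⁻¹ * g.1 0 * g.1 1, g.1 2, g.1 3], ?_, ?_⟩, ?_, ?_⟩
  · rw [ofFn4_prod]
    have := h.2.1
    rw [ofFn4_prod] at this
    simpa [mul_assoc] using this
  · intro i
    have h2 := h.2.2
    fin_cases i
    · simpa using (parts_conj (h.1 0) (h.1 1)).trans (by simpa using h2 1)
    · simpa using h2 0
    · simpa using h2 2
    · simpa using h2 3
  · rw [ofFn4_prod]
    have := g.2.1
    rw [ofFn4_prod] at this
    simpa [mul_assoc] using this
  · intro i
    have g2 := g.2.2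
    fin_cases i
    · simpa using g2 1
    · have : ((g.1 1)⁻¹ * g.1 0 * ((g.1 1)⁻¹)⁻¹).partition.parts = (g.1 0).partition.parts :=
        parts_conj (g.1 1)⁻¹ (g.1 0)
      simp only [inv_inv] at this
      simpa using this.trans (by simpa using g2 0)
    · simpa using g2 2
    · simpa using g2 3
  · rintro ⟨h, hp⟩
    apply Subtype.ext
    funext i
    fin_cases i <;> simp [mul_assoc]
  · rintro ⟨g, gp⟩
    apply Subtype.ext
    funext i
    fin_cases i <;> simp [mul_assoc]

lemma snoc_one {α : Type*} (T : Fin 1 → α) (μ ν : α) :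
    Fin.snoc (Fin.snoc T μ) ν = ![T 0, μ, ν] := by
  funext i; fin_cases i <;> rfl

lemma snoc_two {α : Type*} (T : Fin 2 → α) (μ ν : α) :
    Fin.snoc (Fin.snoc T μ) ν = ![T 0, T 1, μ, ν] := by
  funext i; fin_cases i <;> rfl

lemma Wq_one {n d : ℕ} (T : Fin 1 → Nat.Partition n) (h : colen (T 0) = d) (q : ℝ) :
    Wq q T = q ^ d / (1 - q ^ d) := by
  rw [Wq, Fin.prod_univ_one]
  have : (Finset.univ.filter (fun i : Fin 1 => i ≤ 0)) = Finset.univ := by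
    apply Finset.filter_true_of_mem; intro i _; exact Fin.le_last ..
  rw [this, Fin.sum_univ_one, h]

lemma Wq_two {n : ℕ} (T : Fin 2 → Nat.Partition n) (q : ℝ) :
    Wq q T = (q ^ colen (T 0) / (1 - q ^ colen (T 0))) *
      (q ^ (colen (T 0) + colen (T 1)) / (1 - q ^ (colen (T 0) + colen (T 1)))) := by
  rw [Wq, Fin.prod_univ_two]
  have h1 : ∑ i ∈ Finset.univ.filter (fun i : Fin 2 => i ≤ 0), colen (T i) = colen (T 0) := by
    rw [Finset.sum_filter, Fin.sum_univ_two, if_pos (le_refl _), if_neg (by decide), add_zero]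
  have h2 : (Finset.univ.filter (fun i : Fin 2 => i ≤ 1)) = Finset.univ := by
    apply Finset.filter_true_of_mem; intro i _; exact Fin.le_last ..
  rw [h1, h2, Fin.sum_univ_two]

/-- The main (lowest-order) part of the weight. -/
noncomputable def mainPart (q : ℝ) (d : ℕ) {n k : ℕ} (T : Fin k → Nat.Partition n) : ℝ :=
  if k = 1 then q ^ d
  else if k = 2 ∧ ∀ j : Fin k, (j : ℕ) = 0 → colen (T j) = 1 then q ^ (d + 1) else 0

lemma mainPart_one {n : ℕ} (q : ℝ) (d : ℕ) (T : Fin 1 → Nat.Partition n) :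
    mainPart q d T = q ^ d := by simp [mainPart]

lemma mainPart_two {n : ℕ} (q : ℝ) (d : ℕ) (T : Fin 2 → Nat.Partition n) :
    mainPart q d T = if colen (T 0) = 1 then q ^ (d + 1) else 0 := by
  have h : (∀ j : Fin 2, (j : ℕ) = 0 → colen (T j) = 1) ↔ colen (T 0) = 1 := by
    constructor
    · exact fun h => h 0 rfl
    · intro h j hj
      have : j = 0 := Fin.ext hj
      rw [this]; exact h
  simp [mainPart, h]

lemma mainPart_ge3 {n m : ℕ} (q : ℝ) (d : ℕ) (T : Fin (m + 3) → Nat.Partition n) :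
    mainPart q d T = 0 := by
  rw [mainPart, if_neg (by omega), if_neg (by rintro ⟨h, -⟩; omega)]

lemma mem_Mset_iff {n d k : ℕ} (T : Fin k → Nat.Partition n) :
    T ∈ Mset n d k ↔ (∀ j, 1 ≤ colen (T j)) ∧ ∑ j, colen (T j) = d := by
  simp [Mset]

/-! ### The per-term bounds -/

lemma frac_le {q : ℝ} (hq0 : 0 < q) (hq2 : q < 1 / 2) {m : ℕ} (hm : 1 ≤ m) :
    0 < q ^ m ∧ q ^ m ≤ q ∧ 1 / 2 ≤ 1 - q ^ m ∧
      q ^ m / (1 - q ^ m) ≤ 2 * q ^ m := by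
  have h1 : 0 < q ^ m := pow_pos hq0 m
  have h2 : q ^ m ≤ q := pow_le_of_le_one hq0.le (by linarith) (by omega)
  have h3 : (1 : ℝ) / 2 ≤ 1 - q ^ m := by linarith
  refine ⟨h1, h2, h3, ?_⟩
  rw [div_le_iff₀ (by linarith)]
  nlinarith

lemma exp_ge_one {n k : ℕ} {T : Fin k → Nat.Partition n} (hT1 : ∀ j, 1 ≤ colen (T j))
    (j : Fin k) : 1 ≤ ∑ i ∈ Finset.univ.filter (fun i => i ≤ j), colen (T i) := by
  have hj : j ∈ Finset.univ.filter (fun i => i ≤ j) := by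
    simp [Finset.mem_filter]
  calc 1 ≤ colen (T j) := hT1 j
    _ ≤ _ := Finset.single_le_sum (f := fun i => colen (T i)) (fun i _ => Nat.zero_le _) hj

lemma Wq_nonneg {n k : ℕ} {T : Fin k → Nat.Partition n} (hT1 : ∀ j, 1 ≤ colen (T j))
    {q : ℝ} (hq0 : 0 < q) (hq2 : q < 1 / 2) : 0 ≤ Wq q T := by
  apply Finset.prod_nonneg
  intro j _
  obtain ⟨h1, _, h3, _⟩ := frac_le hq0 hq2 (exp_ge_one hT1 j)
  exact div_nonneg h1.le (by linarith)

lemma Wq_le_pow {n d k : ℕ} {T : Fin k → Nat.Partition n} (hT : T ∈ Mset n d k)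
    {q : ℝ} (hq0 : 0 < q) (hq2 : q < 1 / 2) :
    Wq q T ≤ 2 ^ k *
      q ^ (∑ j : Fin k, ∑ i ∈ Finset.univ.filter (fun i => i ≤ j), colen (T i)) := by
  obtain ⟨hT1, hT2⟩ := (mem_Mset_iff T).1 hT
  rw [Wq]
  calc ∏ j : Fin k, (q ^ (∑ i ∈ Finset.univ.filter (fun i => i ≤ j), colen (T i)) /
        (1 - q ^ (∑ i ∈ Finset.univ.filter (fun i => i ≤ j), colen (T i))))
      ≤ ∏ j : Fin k, (2 * q ^ (∑ i ∈ Finset.univ.filter (fun i => i ≤ j), colen (T i))) := by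
        apply Finset.prod_le_prod
        · intro j _
          obtain ⟨h1, _, h3, _⟩ := frac_le hq0 hq2 (exp_ge_one hT1 j)
          exact div_nonneg h1.le (by linarith)
        · intro j _
          exact (frac_le hq0 hq2 (exp_ge_one hT1 j)).2.2.2
    _ = 2 ^ k * q ^ (∑ j : Fin k, ∑ i ∈ Finset.univ.filter (fun i => i ≤ j), colen (T i)) := by
        rw [Finset.prod_mul_distrib, Finset.prod_const, Finset.prod_pow_eq_pow_sum]
        simp

lemma filter_le_last {k : ℕ} :
    (Finset.univ.filter (fun i : Fin (k + 1) => i ≤ Fin.last k)) = Finset.univ := by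
  apply Finset.filter_true_of_mem; intro i _; exact Fin.le_last ..

lemma term_bound {n d k : ℕ} (hd : 2 ≤ d) (hk1 : 1 ≤ k) (hkd : k ≤ d)
    {T : Fin k → Nat.Partition n} (hT : T ∈ Mset n d k) {q : ℝ}
    (hq0 : 0 < q) (hq2 : q < 1 / 2) :
    |Wq q T - mainPart q d T| ≤ 2 ^ (d + 3) * q ^ (d + 2) := by
  obtain ⟨hT1, hT2⟩ := (mem_Mset_iff T).1 hT
  have hq1 : q < 1 := by linarith
  have hqd2 : 0 < q ^ (d + 2) := pow_pos hq0 _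
  have h2dd : (2 : ℝ) ^ (d + 3) ≥ 8 := by
    calc (8 : ℝ) = 2 ^ 3 := by norm_num
      _ ≤ 2 ^ (d + 3) := pow_le_pow_right₀ (by norm_num) (by omega)
  match k, hk1 with
  | 1, _ =>
    -- k = 1 : colen (T 0) = d
    have hc : colen (T 0) = d := by
      have := hT2; rwa [Fin.sum_univ_one] at this
    rw [Wq_one T hc, mainPart_one]
    obtain ⟨h1, h2, h3, h4⟩ := frac_le hq0 hq2 (show 1 ≤ d by omega)
    have heq : q ^ d / (1 - q ^ d) - q ^ d = q ^ d * q ^ d / (1 - q ^ d) := by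
      field_simp
      ring
    rw [heq, abs_of_nonneg (by positivity)]
    have hdd : q ^ d * q ^ d = q ^ (d + d) := by rw [pow_add]
    have hle : q ^ (d + d) ≤ q ^ (d + 2) := pow_le_pow_of_le_one hq0.le hq1.le (by omega)
    rw [div_le_iff₀ (by linarith)]
    have e2 : (1 : ℝ) ≤ 2 ^ (d + 3) * (1 - q ^ d) := by
      nlinarith [mul_nonneg (by linarith : (0:ℝ) ≤ 2 ^ (d + 3) - 8)
        (by linarith : (0:ℝ) ≤ (1 - q ^ d) - 1 / 2)]
    have e3 : q ^ (d + 2) * 1 ≤ q ^ (d + 2) * (2 ^ (d + 3) * (1 - q ^ d)) :=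
      mul_le_mul_of_nonneg_left e2 hqd2.le
    calc q ^ d * q ^ d ≤ q ^ (d + 2) := by rw [hdd]; exact hle
      _ = q ^ (d + 2) * 1 := by ring
      _ ≤ q ^ (d + 2) * (2 ^ (d + 3) * (1 - q ^ d)) := e3
      _ = 2 ^ (d + 3) * q ^ (d + 2) * (1 - q ^ d) := by ring
  | 2, _ =>
    -- k = 2
    have hsum : colen (T 0) + colen (T 1) = d := by
      have := hT2; rwa [Fin.sum_univ_two] at this
    rw [Wq_two T, hsum, mainPart_two]
    by_cases hc : colen (T 0) = 1
    · rw [hc, if_pos rfl, pow_one]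
      obtain ⟨hd1, hd2, hd3, hd4⟩ := frac_le hq0 hq2 (show 1 ≤ d by omega)
      have hden : 0 < (1 - q) * (1 - q ^ d) := by nlinarith
      have heq : q / (1 - q) * (q ^ d / (1 - q ^ d)) - q ^ (d + 1) =
          q * q ^ d * ((q + q ^ d - q * q ^ d) / ((1 - q) * (1 - q ^ d))) := by
        have h1q : (1:ℝ) - q ≠ 0 := by intro h; linarith
        have h1qd : (1:ℝ) - q ^ d ≠ 0 := by intro h; linarith
        rw [pow_succ]
        field_simp
        ring
      have hnum0 : 0 ≤ q + q ^ d - q * q ^ d := by nlinarith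
      have hD4 : (1 : ℝ) / 4 ≤ (1 - q) * (1 - q ^ d) := by
        nlinarith [mul_nonneg (by linarith : (0:ℝ) ≤ (1 - q) - 1 / 2)
          (by linarith : (0:ℝ) ≤ (1 - q ^ d) - 1 / 2)]
      have hF : (q + q ^ d - q * q ^ d) / ((1 - q) * (1 - q ^ d)) ≤ 8 * q := by
        rw [div_le_iff₀ hden]
        nlinarith [mul_le_mul_of_nonneg_left hD4 (show (0:ℝ) ≤ 8 * q by positivity),
          mul_pos hq0 hd1]
      rw [heq, abs_of_nonneg (by positivity)]
      have hqd2' : q * q ^ d * (8 * q) = 8 * q ^ (d + 2) := by ring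
      calc q * q ^ d * ((q + q ^ d - q * q ^ d) / ((1 - q) * (1 - q ^ d)))
          ≤ q * q ^ d * (8 * q) := by
            apply mul_le_mul_of_nonneg_left hF (by positivity)
        _ = 8 * q ^ (d + 2) := by ring
        _ ≤ 2 ^ (d + 3) * q ^ (d + 2) := by nlinarith
    · rw [if_neg hc, sub_zero]
      have hc2 : 2 ≤ colen (T 0) := by have := hT1 0; omega
      obtain ⟨h1, h2, h3, h4⟩ := frac_le hq0 hq2 (hT1 0)
      obtain ⟨g1, g2, g3, g4⟩ := frac_le hq0 hq2 (show 1 ≤ d by omega)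
      rw [hsum] at *
      have hW : q ^ colen (T 0) / (1 - q ^ colen (T 0)) * (q ^ d / (1 - q ^ d)) ≤
          (2 * q ^ colen (T 0)) * (2 * q ^ d) := by
        apply mul_le_mul h4 g4 (by positivity) (by positivity)
      rw [abs_of_nonneg (by positivity)]
      have hcd : q ^ colen (T 0) * q ^ d = q ^ (colen (T 0) + d) := by rw [pow_add]
      have hle : q ^ (colen (T 0) + d) ≤ q ^ (d + 2) :=
        pow_le_pow_of_le_one hq0.le hq1.le (by omega)
      nlinarith
  | (m + 3), _ =>
    -- k ≥ 3
    rw [mainPart_ge3, sub_zero, abs_of_nonneg (Wq_nonneg hT1 hq0 hq2)]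
    have hbig : d + 2 ≤ ∑ j : Fin (m + 3),
        ∑ i ∈ Finset.univ.filter (fun i => i ≤ j), colen (T i) := by
      set f : Fin (m + 3) → ℕ :=
        fun j => ∑ i ∈ Finset.univ.filter (fun i => i ≤ j), colen (T i) with hf
      show d + 2 ≤ ∑ j : Fin (m + 3), f j
      have hne : (1 : Fin (m + 3)) ≠ Fin.last (m + 2) := by
        simp only [ne_eq, Fin.ext_iff, Fin.val_one, Fin.val_last]
        omega
      have hsub : ({1, Fin.last (m + 2)} : Finset (Fin (m + 3))) ⊆ Finset.univ :=
        Finset.subset_univ _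
      have h1 : f 1 + f (Fin.last (m + 2)) = ∑ j ∈ ({1, Fin.last (m + 2)} :
          Finset (Fin (m + 3))), f j := (Finset.sum_pair hne).symm
      have h2 : ∑ j ∈ ({1, Fin.last (m + 2)} : Finset (Fin (m + 3))), f j ≤
          ∑ j : Fin (m + 3), f j := Finset.sum_le_sum_of_subset hsub
      have hf1 : 2 ≤ f 1 := by
        have hsub01 : ({0, 1} : Finset (Fin (m + 3))) ⊆
            Finset.univ.filter (fun i => i ≤ (1 : Fin (m + 3))) := by
          intro i hi
          simp only [Finset.mem_insert, Finset.mem_singleton] at hi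
          rcases hi with rfl | rfl <;> simp [Finset.mem_filter] <;>
            simp [Fin.le_def, Fin.val_one, Nat.mod_eq_of_lt]
        have hne01 : (0 : Fin (m + 3)) ≠ 1 := by
          simp [Fin.ext_iff]
        have : colen (T 0) + colen (T 1) = ∑ i ∈ ({0, 1} : Finset (Fin (m + 3))),
            colen (T i) := (Finset.sum_pair (f := fun i => colen (T i)) hne01).symm
        have hle : ∑ i ∈ ({0, 1} : Finset (Fin (m + 3))), colen (T i) ≤ f 1 :=
          Finset.sum_le_sum_of_subset hsub01
        have := hT1 0
        have := hT1 1
        omega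
      have hfl : f (Fin.last (m + 2)) = d := by
        rw [hf]
        simp only []
        rw [filter_le_last, hT2]
      omega
    calc Wq q T ≤ 2 ^ (m + 3) * q ^ (∑ j : Fin (m + 3),
          ∑ i ∈ Finset.univ.filter (fun i => i ≤ j), colen (T i)) :=
        Wq_le_pow hT hq0 hq2
      _ ≤ 2 ^ (d + 3) * q ^ (d + 2) := by
        apply mul_le_mul
        · exact pow_le_pow_right₀ (by norm_num) (by omega)
        · exact pow_le_pow_of_le_one hq0.le hq1.le hbig
        · positivity
        · positivity

/-! ### Reindexing lemmas -/

lemma sum_Mset1 {n d : ℕ} (hd : 1 ≤ d) (f : Nat.Partition n → ℝ) :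
    ∑ T ∈ Mset n d 1, f (T 0) =
      ∑ P ∈ Finset.univ.filter (fun P : Nat.Partition n => colen P = d), f P := by
  have hmem : ∀ T : Fin 1 → Nat.Partition n, T ∈ Mset n d 1 ↔ colen (T 0) = d := by
    intro T
    simp only [Mset, Finset.mem_filter, Finset.mem_univ, true_and, Fin.sum_univ_one,
      Fin.forall_fin_one]
    constructor
    · exact fun h => h.2
    · exact fun h => ⟨h ▸ hd, h⟩
  refine Finset.sum_nbij' (fun T => T 0) (fun P => fun _ => P) ?_ ?_ ?_ ?_ ?_
  · intro T hT; simp [(hmem T).1 hT]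
  · intro P hP; rw [hmem]; simpa using hP
  · intro T _; funext i; fin_cases i; rfl
  · intro P _; rfl
  · intro T _; rfl

lemma sum_Mset2 {n d : ℕ} (hd : 2 ≤ d) (f : Nat.Partition n → Nat.Partition n → ℝ) :
    ∑ T ∈ (Mset n d 2).filter (fun T => colen (T 0) = 1), f (T 1) (T 0) =
      ∑ P ∈ Finset.univ.filter (fun P : Nat.Partition n × Nat.Partition n =>
          colen P.1 = d - 1 ∧ colen P.2 = 1), f P.1 P.2 := by
  refine Finset.sum_nbij' (fun T => (T 1, T 0)) (fun P => ![P.2, P.1]) ?_ ?_ ?_ ?_ ?_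
  · intro T hT
    simp only [Mset, Finset.mem_filter, Finset.mem_univ, true_and, Fin.sum_univ_two] at hT ⊢
    obtain ⟨⟨h1, h2⟩, h3⟩ := hT
    refine ⟨by omega, h3⟩
  · intro P hP
    simp only [Finset.mem_filter, Finset.mem_univ, true_and] at hP
    simp only [Mset, Finset.mem_filter, Finset.mem_univ, true_and, Fin.sum_univ_two]
    refine ⟨⟨fun j => ?_, ?_⟩, ?_⟩
    · fin_cases j <;> simp [hP.1, hP.2] <;> omega
    · simp [hP.1, hP.2]; omega
    · simp [hP.2]
  · intro T _; funext i; fin_cases i <;> rfl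
  · intro P _; rfl
  · intro T _; rfl

/-! ### The main theorem -/

set_option maxHeartbeats 1000000 in
/-- For `d ≥ 2`, `n ≥ 2d` and partitions `μ, ν` of `n`, there exist `C > 0`
and `δ ∈ (0,1)` such that for all `q ∈ (0,δ)`:
`|H^d_q(μ,ν) - q^d Σ_{ℓ*(μ⁽¹⁾)=d} H(μ⁽¹⁾,μ,ν)
  - q^{d+1} Σ_{ℓ*(μ⁽¹⁾)=d-1, ℓ*(μ⁽²⁾)=1} H(μ⁽¹⁾,μ⁽²⁾,μ,ν)| ≤ C·q^{d+2}`. -/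
theorem zero_temp_stmt13 (d n : ℕ) (hd : 2 ≤ d) (hn : 2 * d ≤ n)
    (μ ν : Nat.Partition n) :
    ∃ C : ℝ, 0 < C ∧ ∃ δ ∈ Set.Ioo (0 : ℝ) 1, ∀ q ∈ Set.Ioo (0 : ℝ) δ,
      |Hdq q d μ ν
        - q ^ d * ∑ P ∈ Finset.univ.filter (fun P : Nat.Partition n => colen P = d),
            ((Hur ![P, μ, ν] : ℚ) : ℝ)
        - q ^ (d + 1) * ∑ P ∈ Finset.univ.filter
            (fun P : Nat.Partition n × Nat.Partition n =>
              colen P.1 = d - 1 ∧ colen P.2 = 1),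
            ((Hur ![P.1, P.2, μ, ν] : ℚ) : ℝ)| ≤ C * q ^ (d + 2) := by
  set K : ℝ := ∑ k ∈ Finset.Icc 1 d, ∑ T ∈ Mset n d k,
    |((Hur (Fin.snoc (Fin.snoc T μ) ν) : ℚ) : ℝ)| with hK
  have hK0 : 0 ≤ K := by
    apply Finset.sum_nonneg; intro k _
    apply Finset.sum_nonneg; intro T _
    exact abs_nonneg _
  refine ⟨2 ^ (d + 3) * (K + 1), by positivity, 1 / 2, by norm_num, ?_⟩
  rintro q ⟨hq0, hq2⟩
  -- the two explicit sums
  set S1 : ℝ := ∑ P ∈ Finset.univ.filter (fun P : Nat.Partition n => colen P = d),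
      ((Hur ![P, μ, ν] : ℚ) : ℝ) with hS1
  set S2 : ℝ := ∑ P ∈ Finset.univ.filter
      (fun P : Nat.Partition n × Nat.Partition n =>
        colen P.1 = d - 1 ∧ colen P.2 = 1),
      ((Hur ![P.1, P.2, μ, ν] : ℚ) : ℝ) with hS2
  -- the main part of the sum equals the two leading terms
  have hmain : ∑ k ∈ Finset.Icc 1 d, ∑ T ∈ Mset n d k,
      mainPart q d T * ((Hur (Fin.snoc (Fin.snoc T μ) ν) : ℚ) : ℝ)
      = q ^ d * S1 + q ^ (d + 1) * S2 := by
    have hsubset : ({1, 2} : Finset ℕ) ⊆ Finset.Icc 1 d := by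
      intro x hx
      simp only [Finset.mem_insert, Finset.mem_singleton] at hx
      rcases hx with rfl | rfl <;> simp [Finset.mem_Icc] <;> omega
    have hvanish : ∀ k ∈ Finset.Icc 1 d, k ∉ ({1, 2} : Finset ℕ) →
        (∑ T ∈ Mset n d k,
          mainPart q d T * ((Hur (Fin.snoc (Fin.snoc T μ) ν) : ℚ) : ℝ)) = 0 := by
      intro k _ hk
      simp only [Finset.mem_insert, Finset.mem_singleton, not_or] at hk
      apply Finset.sum_eq_zero
      intro T _
      have : mainPart q d T = 0 := by
        rw [mainPart, if_neg hk.1, if_neg (by rintro ⟨h, -⟩; exact hk.2 h)]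
      rw [this, zero_mul]
    rw [← Finset.sum_subset hsubset hvanish]
    rw [Finset.sum_insert (by decide), Finset.sum_singleton]
    have hterm1 : ∑ T ∈ Mset n d 1,
        mainPart q d T * ((Hur (Fin.snoc (Fin.snoc T μ) ν) : ℚ) : ℝ) = q ^ d * S1 := by
      have : ∀ T : Fin 1 → Nat.Partition n,
          mainPart q d T * ((Hur (Fin.snoc (Fin.snoc T μ) ν) : ℚ) : ℝ)
          = q ^ d * ((Hur ![T 0, μ, ν] : ℚ) : ℝ) := by
        intro T
        rw [mainPart_one, snoc_one]
      rw [Finset.sum_congr rfl (fun T _ => this T), ← Finset.mul_sum]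
      rw [sum_Mset1 (by omega) (fun P => ((Hur ![P, μ, ν] : ℚ) : ℝ))]
    have hterm2 : ∑ T ∈ Mset n d 2,
        mainPart q d T * ((Hur (Fin.snoc (Fin.snoc T μ) ν) : ℚ) : ℝ)
        = q ^ (d + 1) * S2 := by
      have step1 : ∀ T : Fin 2 → Nat.Partition n,
          mainPart q d T * ((Hur (Fin.snoc (Fin.snoc T μ) ν) : ℚ) : ℝ)
          = if colen (T 0) = 1 then
              q ^ (d + 1) * ((Hur ![T 1, T 0, μ, ν] : ℚ) : ℝ) else 0 := by
        intro T
        rw [mainPart_two, snoc_two, ite_mul, zero_mul]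
        congr 1
        rw [hur_swap]
      rw [Finset.sum_congr rfl (fun T _ => step1 T), ← Finset.sum_filter, ← Finset.mul_sum]
      rw [sum_Mset2 hd (fun A B => ((Hur ![A, B, μ, ν] : ℚ) : ℝ))]
    rw [hterm1, hterm2]
  -- rewrite the difference as a sum of remainders
  have hdiff : Hdq q d μ ν - q ^ d * S1 - q ^ (d + 1) * S2
      = ∑ k ∈ Finset.Icc 1 d, ∑ T ∈ Mset n d k,
          (Wq q T - mainPart q d T) * ((Hur (Fin.snoc (Fin.snoc T μ) ν) : ℚ) : ℝ) := by
    rw [Hdq]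
    rw [sub_sub, ← hmain, ← Finset.sum_sub_distrib]
    congr 1
    funext k
    rw [← Finset.sum_sub_distrib]
    congr 1
    funext T
    ring
  rw [hdiff]
  -- bound the remainder sum
  have hbound : |∑ k ∈ Finset.Icc 1 d, ∑ T ∈ Mset n d k,
      (Wq q T - mainPart q d T) * ((Hur (Fin.snoc (Fin.snoc T μ) ν) : ℚ) : ℝ)|
      ≤ 2 ^ (d + 3) * q ^ (d + 2) * K := by
    calc |∑ k ∈ Finset.Icc 1 d, ∑ T ∈ Mset n d k,
        (Wq q T - mainPart q d T) * ((Hur (Fin.snoc (Fin.snoc T μ) ν) : ℚ) : ℝ)|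
        ≤ ∑ k ∈ Finset.Icc 1 d, |∑ T ∈ Mset n d k,
            (Wq q T - mainPart q d T) * ((Hur (Fin.snoc (Fin.snoc T μ) ν) : ℚ) : ℝ)| :=
          Finset.abs_sum_le_sum_abs _ _
      _ ≤ ∑ k ∈ Finset.Icc 1 d, ∑ T ∈ Mset n d k,
            |(Wq q T - mainPart q d T) * ((Hur (Fin.snoc (Fin.snoc T μ) ν) : ℚ) : ℝ)| := by
          apply Finset.sum_le_sum
          intro k _
          exact Finset.abs_sum_le_sum_abs _ _
      _ ≤ ∑ k ∈ Finset.Icc 1 d, ∑ T ∈ Mset n d k,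
            (2 ^ (d + 3) * q ^ (d + 2)) *
              |((Hur (Fin.snoc (Fin.snoc T μ) ν) : ℚ) : ℝ)| := by
          apply Finset.sum_le_sum
          intro k hk
          apply Finset.sum_le_sum
          intro T hT
          rw [abs_mul]
          apply mul_le_mul_of_nonneg_right _ (abs_nonneg _)
          have hk' := Finset.mem_Icc.1 hk
          exact term_bound hd hk'.1 hk'.2 hT hq0 hq2
      _ = 2 ^ (d + 3) * q ^ (d + 2) * K := by
          rw [hK, Finset.mul_sum]
          congr 1
          funext k
          rw [Finset.mul_sum]
  calc |∑ k ∈ Finset.Icc 1 d, ∑ T ∈ Mset n d k,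
      (Wq q T - mainPart q d T) * ((Hur (Fin.snoc (Fin.snoc T μ) ν) : ℚ) : ℝ)|
      ≤ 2 ^ (d + 3) * q ^ (d + 2) * K := hbound
    _ ≤ 2 ^ (d + 3) * (K + 1) * q ^ (d + 2) := by
        have hq : 0 < q ^ (d + 2) := pow_pos hq0 _
        nlinarith [mul_pos (pow_pos (show (0:ℝ) < 2 by norm_num) (d + 3)) hq]
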